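/- Let K be a finite field with q^n elements. For an integer k with base-q expansion k = Σ_{j=0}^{n−1} a_j q^j where every a_j ∈ {0,1}, and for 0 ≤ i ≤ n−1, let k^{(i)} = Σ_{j=0}^{n−1} a_{(j−i) mod n} q^j be the i-th cyclic shift of the digit vector of k; for α ∈ K set H_{α,k} = Σ_{i=0}^{n−1} α^{q^i}·X^{k^{(i)}}. Then a polynomial f ∈ K[X] satisfies f^q − f = (X^{q^n} − X)·f′ if and only if f is a finite sum of polynomials of the form H_{α,k} with α ∈ K and k having all base-q digits in {0,1}. -/

import Mathlib

open Polynomial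

/-- The `i`-th cyclic shift of the base-`q` digit vector `(a 0, …, a (n−1))`,
read off as a natural number: `k^{(i)} = Σ_{j<n} a_{(j−i) mod n} q^j`. -/
def shiftExp (q n : ℕ) (a : ℕ → ℕ) (i : ℕ) : ℕ :=
  ∑ j ∈ Finset.range n, a ((j + n - i) % n) * q ^ j

/-- The polynomial `H_{α,k} = Σ_{i<n} α^{q^i} · X^{k^{(i)}}`, where `k` is encoded by
its base-`q` digit vector `a`. -/
noncomputable def Hpoly (q n : ℕ) {K : Type*} [Field K] (α : K) (a : ℕ → ℕ) : K[X] :=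
  ∑ i ∈ Finset.range n, C (α ^ q ^ i) * X ^ shiftExp q n a i

private lemma sum_shift {M : Type*} [AddCommGroup M] (F : ℕ → M) (n : ℕ) (h : F n = F 0) :
    ∑ i ∈ Finset.range n, F (i + 1) = ∑ i ∈ Finset.range n, F i := by
  have h1 := Finset.sum_range_succ' F n
  rw [Finset.sum_range_succ, h] at h1
  exact (add_right_cancel h1).symm

private lemma geom_q {q : ℕ} (hq : 2 ≤ q) (n : ℕ) :
    (q - 1) * (∑ j ∈ Finset.range n, q ^ j) + 1 = q ^ n := by
  induction n with
  | zero => simp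
  | succ n ih =>
    rw [Finset.sum_range_succ]
    have h1 : q - 1 + 1 = q := by omega
    calc (q - 1) * ((∑ j ∈ Finset.range n, q ^ j) + q ^ n) + 1
        = ((q - 1) * (∑ j ∈ Finset.range n, q ^ j) + 1) + (q - 1) * q ^ n := by ring
      _ = (q - 1 + 1) * q ^ n := by rw [ih]; ring
      _ = q ^ (n + 1) := by rw [h1, pow_succ]; ring

private lemma sum_digits_eq {q : ℕ} (hq : 2 ≤ q) : ∀ (n k : ℕ), k < q ^ n →
    ∑ j ∈ Finset.range n, (k / q ^ j % q) * q ^ j = k := by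
  intro n
  induction n with
  | zero => intro k hk; simp at hk ⊢; omega
  | succ n ih =>
    intro k hk
    have hkq : k / q < q ^ n := by
      rw [Nat.div_lt_iff_lt_mul (by omega)]
      calc k < q ^ (n + 1) := hk
        _ = q ^ n * q := pow_succ q n
    rw [Finset.sum_range_succ']
    have hterm : ∀ j, (k / q ^ (j + 1) % q) * q ^ (j + 1) = (k / q / q ^ j % q) * q ^ j * q := by
      intro j
      rw [Nat.div_div_eq_div_mul, ← pow_succ', pow_succ]
      ring
    calc (∑ j ∈ Finset.range n, (k / q ^ (j + 1) % q) * q ^ (j + 1)) + k / q ^ 0 % q * q ^ 0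
        = (∑ j ∈ Finset.range n, (k / q / q ^ j % q) * q ^ j) * q + k % q := by
          rw [Finset.sum_mul]
          congr 1
          · exact Finset.sum_congr rfl fun j _ => hterm j
          · simp
      _ = k / q * q + k % q := by rw [ih _ hkq]
      _ = k := by rw [mul_comm, Nat.div_add_mod]

private lemma digit_sum {q : ℕ} (hq : 2 ≤ q) : ∀ (n : ℕ) (b : ℕ → ℕ), (∀ j, b j < q) →
    ∀ i, i < n → (∑ j ∈ Finset.range n, b j * q ^ j) / q ^ i % q = b i := by
  intro n
  induction n with
  | zero => intro b hb i hi; omega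
  | succ n ih =>
    intro b hb i hi
    rw [Finset.sum_range_succ']
    have hS : (∑ j ∈ Finset.range n, b (j + 1) * q ^ (j + 1)) + b 0 * q ^ 0
        = b 0 + q * ∑ j ∈ Finset.range n, b (j + 1) * q ^ j := by
      rw [Finset.mul_sum, add_comm]
      congr 1
      · simp
      · exact Finset.sum_congr rfl fun j _ => by rw [pow_succ]; ring
    rw [hS]
    cases i with
    | zero =>
      simp only [pow_zero, Nat.div_one]
      rw [Nat.add_mul_mod_self_left, Nat.mod_eq_of_lt (hb 0)]
    | succ i =>
      have hdiv : (b 0 + q * ∑ j ∈ Finset.range n, b (j + 1) * q ^ j) / q ^ (i + 1)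
          = (∑ j ∈ Finset.range n, b (j + 1) * q ^ j) / q ^ i := by
        rw [pow_succ', ← Nat.div_div_eq_div_mul, Nat.add_mul_div_left _ _ (by omega : 0 < q),
          Nat.div_eq_of_lt (hb 0), zero_add]
      rw [hdiv]
      exact ih (fun j => b (j + 1)) (fun j => hb (j + 1)) i (by omega)

-- master structural lemma
private lemma shiftExp_succ_eq (q n : ℕ) (a : ℕ → ℕ) (i : ℕ) (hi : i < n) :
    shiftExp q n a (i + 1)
      = a (n - 1 - i) + q * (∑ j ∈ Finset.range (n - 1), a ((j + n - i) % n) * q ^ j) := by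
  obtain ⟨m, rfl⟩ : ∃ m, n = m + 1 := ⟨n - 1, by omega⟩
  simp only [Nat.add_sub_cancel]
  rw [shiftExp, Finset.sum_range_succ', Finset.mul_sum, add_comm]
  congr 1
  · have h0 : 0 + (m + 1) - (i + 1) = m - i := by omega
    rw [h0, Nat.mod_eq_of_lt (by omega), pow_zero, mul_one]
  · refine Finset.sum_congr rfl fun j _ => ?_
    have h1 : j + 1 + (m + 1) - (i + 1) = j + (m + 1) - i := by omega
    rw [h1, pow_succ]
    ring

private lemma shiftExp_eq_top (q n : ℕ) (a : ℕ → ℕ) (i : ℕ) (hi : i < n) :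
    shiftExp q n a i
      = (∑ j ∈ Finset.range (n - 1), a ((j + n - i) % n) * q ^ j) + a (n - 1 - i) * q ^ (n - 1) := by
  obtain ⟨m, rfl⟩ : ∃ m, n = m + 1 := ⟨n - 1, by omega⟩
  simp only [Nat.add_sub_cancel]
  rw [shiftExp, Finset.sum_range_succ]
  congr 2
  have : m + (m + 1) - i = (m - i) + (m + 1) := by omega
  rw [this, Nat.add_mod_right, Nat.mod_eq_of_lt (by omega)]

private lemma shiftExp_zero_eq (q n : ℕ) (a : ℕ → ℕ) :
    shiftExp q n a 0 = ∑ j ∈ Finset.range n, a j * q ^ j := by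
  refine Finset.sum_congr rfl fun j hj => ?_
  rw [Finset.mem_range] at hj
  rw [Nat.sub_zero, Nat.add_mod_right, Nat.mod_eq_of_lt hj]

private lemma shiftExp_n_eq (q n : ℕ) (a : ℕ → ℕ) :
    shiftExp q n a n = shiftExp q n a 0 := by
  refine Finset.sum_congr rfl fun j hj => ?_
  rw [Finset.mem_range] at hj
  rw [Nat.add_sub_cancel, Nat.sub_zero, Nat.add_mod_right, Nat.mod_eq_of_lt hj]

private lemma shiftExp_le (q n : ℕ) (a : ℕ → ℕ) (ha : ∀ j, a j ≤ 1) (i : ℕ) :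
    shiftExp q n a i ≤ ∑ j ∈ Finset.range n, q ^ j := by
  refine Finset.sum_le_sum fun j _ => ?_
  calc a ((j + n - i) % n) * q ^ j ≤ 1 * q ^ j := by
        exact Nat.mul_le_mul_right _ (ha _)
    _ = q ^ j := one_mul _


section Derived

variable {q n : ℕ} {a : ℕ → ℕ}

private lemma L1a (hq : 2 ≤ q) (ha : ∀ j, a j ≤ 1) {i : ℕ} (hi : i < n) :
    q * shiftExp q n a i + a (n - 1 - i) = shiftExp q n a (i + 1) + a (n - 1 - i) * q ^ n := by
  rw [shiftExp_succ_eq q n a i hi, shiftExp_eq_top q n a i hi]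
  have hqn : q ^ n = q * q ^ (n - 1) := by
    obtain ⟨m, rfl⟩ : ∃ m, n = m + 1 := ⟨n - 1, by omega⟩
    rw [Nat.add_sub_cancel, pow_succ]
    ring
  rw [hqn]
  ring

private lemma L1b (hq : 2 ≤ q) (ha : ∀ j, a j ≤ 1) {i : ℕ} (hi : i < n) :
    shiftExp q n a (i + 1) % q = a (n - 1 - i) := by
  rw [shiftExp_succ_eq q n a i hi, Nat.add_mul_mod_self_left,
    Nat.mod_eq_of_lt (lt_of_le_of_lt (ha _) hq)]

private lemma L1c (hq : 2 ≤ q) (ha : ∀ j, a j ≤ 1) {i : ℕ} (hi : i < n) :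
    shiftExp q n a (i + 1) / q + (shiftExp q n a (i + 1) % q) * q ^ (n - 1)
      = shiftExp q n a i := by
  rw [L1b hq ha hi, shiftExp_succ_eq q n a i hi, shiftExp_eq_top q n a i hi,
    Nat.add_mul_div_left _ _ (by omega : 0 < q),
    Nat.div_eq_of_lt (lt_of_le_of_lt (ha _) hq), zero_add]

end Derived

private lemma Hpoly_sat {K : Type*} [Field K] [Fintype K] (q n p e : ℕ) (hp : p.Prime)
    (hqpe : q = p ^ e) (he : 1 ≤ e) (hn : 1 ≤ n) (hK : Fintype.card K = q ^ n)
    (α : K) (a : ℕ → ℕ) (ha : ∀ j, a j ≤ 1) :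
    Hpoly q n α a ^ q - Hpoly q n α a = (X ^ q ^ n - X) * derivative (Hpoly q n α a) := by
  haveI : Fact p.Prime := ⟨hp⟩
  haveI hcharK : CharP K p := by
    haveI : CharP K (ringChar K) := ringChar.charP K
    obtain ⟨m, hrp, hcard⟩ := FiniteField.card K (ringChar K)
    have h1 : ringChar K ∣ p ^ (e * n) := by
      rw [pow_mul, ← hqpe, ← hK, hcard]
      exact dvd_pow_self _ (by exact_mod_cast m.ne_zero)
    have h2 : ringChar K = p :=
      (Nat.prime_dvd_prime_iff_eq hrp hp).mp (hrp.dvd_of_dvd_pow h1)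
    exact h2 ▸ ringChar.charP K
  have hq2 : 2 ≤ q := by
    rw [hqpe]; exact Nat.one_lt_pow (by omega) hp.one_lt
  have hqK : ((q : ℕ) : K) = 0 := by
    rw [hqpe]
    push_cast
    rw [CharP.cast_eq_zero K p]
    exact zero_pow (by omega)
  have hcast_mod : ∀ k : ℕ, ((k : ℕ) : K) = ((k % q : ℕ) : K) := by
    intro k
    conv_lhs => rw [← Nat.div_add_mod k q]
    push_cast
    rw [hqK]
    ring
  have hacard : ∀ x : K, x ^ q ^ n = x := by
    intro x
    rw [← hK]
    exact FiniteField.pow_card x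
  have hder : (X ^ q ^ n - X : K[X]) * derivative (Hpoly q n α a)
      = ∑ i ∈ Finset.range n,
          C (α ^ q ^ i * ((shiftExp q n a i % q : ℕ) : K))
            * ((X ^ q ^ n - X) * X ^ (shiftExp q n a i - 1)) := by
    rw [Hpoly, derivative_sum, Finset.mul_sum]
    refine Finset.sum_congr rfl fun i _ => ?_
    rw [derivative_C_mul_X_pow, hcast_mod (shiftExp q n a i)]
    ring
  have hpowsum : Hpoly q n α a ^ q
      = ∑ i ∈ Finset.range n, C (α ^ q ^ (i + 1)) * X ^ (q * shiftExp q n a i) := by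
    rw [Hpoly, hqpe, sum_pow_char_pow]
    refine Finset.sum_congr rfl fun i _ => ?_
    rw [← hqpe, mul_pow, ← C_pow, ← pow_mul, ← pow_mul, ← pow_succ, mul_comm (shiftExp q n a i) q]
  have hterm : ∀ i ∈ Finset.range n, C (α ^ q ^ (i + 1)) * X ^ (q * shiftExp q n a i)
      = C (α ^ q ^ (i + 1)) * X ^ (shiftExp q n a (i + 1))
        + C (α ^ q ^ (i + 1) * ((shiftExp q n a (i + 1) % q : ℕ) : K))
            * ((X ^ q ^ n - X) * X ^ (shiftExp q n a (i + 1) - 1)) := by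
    intro i hi
    rw [Finset.mem_range] at hi
    have hb := L1a hq2 ha hi
    have hmod := L1b hq2 ha hi
    have hble : a (n - 1 - i) ≤ 1 := ha _
    rw [hmod]
    interval_cases h : a (n - 1 - i)
    · have e0 : q * shiftExp q n a i = shiftExp q n a (i + 1) := by omega
      rw [e0]
      simp
    · have hpos : 1 ≤ shiftExp q n a (i + 1) := by
        rcases Nat.eq_zero_or_pos (shiftExp q n a (i + 1)) with h0 | h1
        · rw [h0, Nat.zero_mod] at hmod
          omega
        · exact h1
      obtain ⟨M, hM⟩ : ∃ M, shiftExp q n a (i + 1) = M + 1 :=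
        ⟨shiftExp q n a (i + 1) - 1, by omega⟩
      have e1 : q * shiftExp q n a i = M + q ^ n := by omega
      rw [e1, hM, Nat.add_sub_cancel, pow_add, Nat.cast_one, mul_one]
      ring
  have hsum2 : Hpoly q n α a ^ q
      = (∑ i ∈ Finset.range n, C (α ^ q ^ (i + 1)) * X ^ (shiftExp q n a (i + 1)))
        + ∑ i ∈ Finset.range n,
            C (α ^ q ^ (i + 1) * ((shiftExp q n a (i + 1) % q : ℕ) : K))
              * ((X ^ q ^ n - X) * X ^ (shiftExp q n a (i + 1) - 1)) := by
    rw [hpowsum, ← Finset.sum_add_distrib]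
    exact Finset.sum_congr rfl hterm
  have hre1 : (∑ i ∈ Finset.range n, C (α ^ q ^ (i + 1)) * X ^ (shiftExp q n a (i + 1)))
      = Hpoly q n α a := by
    rw [Hpoly]
    refine sum_shift (fun i => C (α ^ q ^ i) * X ^ (shiftExp q n a i)) n ?_
    show C (α ^ q ^ n) * X ^ (shiftExp q n a n) = C (α ^ q ^ 0) * X ^ (shiftExp q n a 0)
    rw [shiftExp_n_eq, hacard, pow_zero, pow_one]
  have hre2 : (∑ i ∈ Finset.range n,
        C (α ^ q ^ (i + 1) * ((shiftExp q n a (i + 1) % q : ℕ) : K))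
          * ((X ^ q ^ n - X) * X ^ (shiftExp q n a (i + 1) - 1)))
      = ∑ i ∈ Finset.range n,
          C (α ^ q ^ i * ((shiftExp q n a i % q : ℕ) : K))
            * ((X ^ q ^ n - X) * X ^ (shiftExp q n a i - 1)) := by
    refine sum_shift (fun i => C (α ^ q ^ i * ((shiftExp q n a i % q : ℕ) : K))
      * ((X ^ q ^ n - X) * X ^ (shiftExp q n a i - 1))) n ?_
    show C (α ^ q ^ n * ((shiftExp q n a n % q : ℕ) : K))
          * ((X ^ q ^ n - X) * X ^ (shiftExp q n a n - 1))
        = C (α ^ q ^ 0 * ((shiftExp q n a 0 % q : ℕ) : K))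
          * ((X ^ q ^ n - X) * X ^ (shiftExp q n a 0 - 1))
    rw [shiftExp_n_eq, hacard, pow_zero, pow_one]
  rw [hsum2, hre1, hre2, ← hder]
  ring


private lemma coeff_key {K : Type*} [Field K] (p e q n : ℕ) [CharP K p] (hpf : Fact p.Prime)
    (hqpe : q = p ^ e) (f : K[X])
    (hE : f ^ q - f = (X ^ q ^ n - X) * derivative f) (m : ℕ) :
    (if q ∣ m then f.coeff (m / q) ^ q else 0) - f.coeff m
      = (if q ^ n ≤ m then f.coeff (m - q ^ n + 1) * (((m - q ^ n : ℕ) : K) + 1) else 0)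
        - (if 1 ≤ m then f.coeff (m - 1 + 1) * (((m - 1 : ℕ) : K) + 1) else 0) := by
  haveI := hpf
  have hq1 : 0 < q := by rw [hqpe]; exact pow_pos hpf.out.pos e
  have hfrob : ∀ x : K, (frobenius K p ^ e) x = x ^ q := by
    intro x
    rw [RingHom.coe_pow, ← coe_iterateFrobenius, iterateFrobenius_def, hqpe]
  have hfq : f ^ q = Polynomial.map (frobenius K p ^ e) (Polynomial.expand K q f) := by
    rw [hqpe, ← Polynomial.map_iterateFrobenius_expand (p := p) f e]
    congr 1
    ext x
    rw [RingHom.coe_pow, ← coe_iterateFrobenius]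
  have h0 : (f ^ q).coeff m - f.coeff m = ((X ^ q ^ n - X) * derivative f).coeff m := by
    rw [← coeff_sub, hE]
  rw [hfq, coeff_map, Polynomial.coeff_expand hq1, apply_ite (frobenius K p ^ e),
    map_zero, hfrob] at h0
  have hRHS : (X ^ q ^ n - X : K[X]) * derivative f
      = derivative f * X ^ (q ^ n) - derivative f * X ^ 1 := by ring
  rw [hRHS, coeff_sub, coeff_mul_X_pow', coeff_mul_X_pow'] at h0
  simp only [coeff_derivative, pow_one] at h0
  convert h0 using 2


private lemma structure_lemma {K : Type*} [Field K] [Fintype K] (q n p e : ℕ) [CharP K p]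
    (hpf : Fact p.Prime) (hqpe : q = p ^ e) (he : 1 ≤ e) (hn : 1 ≤ n)
    (hK : Fintype.card K = q ^ n)
    (f : K[X]) (hE : f ^ q - f = (X ^ q ^ n - X) * derivative f) :
    (∀ k, (∑ j ∈ Finset.range n, q ^ j) < k → f.coeff k = 0) ∧
    ((∀ k, k ≤ (∑ j ∈ Finset.range n, q ^ j) → k % q ≤ 1 →
      f.coeff k = f.coeff (k / q + k % q * q ^ (n - 1)) ^ q) ∧
    (∀ j k, 2 ≤ k / q ^ j % q → f.coeff k = 0)) := by
  have hq2 : 2 ≤ q := by rw [hqpe]; exact Nat.one_lt_pow (by omega) hpf.out.one_lt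
  set D : ℕ := ∑ j ∈ Finset.range n, q ^ j with hD
  have hgeom : (q - 1) * D + 1 = q ^ n := geom_q hq2 n
  have hDle : D ≤ (q - 1) * D := Nat.le_mul_of_pos_left D (by omega)
  have hDlt : D < q ^ n := by omega
  have hqK : ((q : ℕ) : K) = 0 := by
    rw [hqpe]
    push_cast
    rw [CharP.cast_eq_zero K p]
    exact zero_pow (by omega)
  have hcastq : ∀ k : ℕ, ((k : ℕ) : K) = ((k % q : ℕ) : K) := by
    intro k
    conv_lhs => rw [← Nat.div_add_mod k q]
    push_cast
    rw [hqK]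
    ring
  -- degree bound
  have hdeg : ∀ k, D < k → f.coeff k = 0 := by
    rcases eq_or_ne f 0 with rfl | hf0
    · intro k _; simp
    · suffices hnd : f.natDegree ≤ D by
        intro k hk; exact coeff_eq_zero_of_natDegree_lt (lt_of_le_of_lt hnd hk)
      by_contra hc
      push_neg at hc
      set d := f.natDegree with hd
      have hlead : f.coeff d ≠ 0 := by
        rw [hd, ← Polynomial.leadingCoeff]
        exact Polynomial.leadingCoeff_ne_zero.mpr hf0
      have key := coeff_key p e q n hpf hqpe f hE (q * d)
      have h2 : (q * d) / q = d := Nat.mul_div_cancel_left d (by omega)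
      have hqd : q * d = (q - 1) * d + d := by
        rw [Nat.sub_one_mul]
        have : d ≤ q * d := Nat.le_mul_of_pos_left d (by omega)
        omega
      have hd1 : (q - 1) * (D + 1) ≤ (q - 1) * d := Nat.mul_le_mul_left _ (by omega)
      have hd2 : (q - 1) * (D + 1) = (q - 1) * D + (q - 1) := by ring
      have h3 : q ^ n + d ≤ q * d := by omega
      rw [if_pos (Dvd.intro d rfl), if_pos (by omega : q ^ n ≤ q * d),
        if_pos (by omega : 1 ≤ q * d), h2,
        coeff_eq_zero_of_natDegree_lt (by omega : f.natDegree < q * d),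
        coeff_eq_zero_of_natDegree_lt (by omega : f.natDegree < q * d - q ^ n + 1),
        coeff_eq_zero_of_natDegree_lt (by omega : f.natDegree < q * d - 1 + 1)] at key
      simp only [zero_mul, sub_zero, zero_sub, neg_zero] at key
      exact hlead (pow_eq_zero_iff (by omega : q ≠ 0) |>.mp key)
  -- relation R
  have hR : ∀ k, k ≤ D → k % q ≤ 1 → f.coeff k = f.coeff (k / q + k % q * q ^ (n - 1)) ^ q := by
    intro k hkD hk1
    have hdm := Nat.div_add_mod k q
    rcases Nat.lt_or_ge (k % q) 1 with h0 | h1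
    · -- k % q = 0
      have hk0 : k % q = 0 := by omega
      have key := coeff_key p e q n hpf hqpe f hE k
      rw [if_pos (Nat.dvd_of_mod_eq_zero hk0), if_neg (by omega : ¬ q ^ n ≤ k)] at key
      rw [hk0, Nat.zero_mul, Nat.add_zero]
      rcases Nat.eq_zero_or_pos k with rfl | hkpos
      · rw [if_neg (by omega : ¬ 1 ≤ 0)] at key
        linear_combination -key
      · rw [if_pos (show (1:ℕ) ≤ k by omega)] at key
        have hc : (((k - 1 : ℕ) : K) + 1) = ((k : ℕ) : K) := by
          rw [← Nat.cast_one (R := K), ← Nat.cast_add, Nat.sub_add_cancel hkpos]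
        have hcast0 : ((k : ℕ) : K) = 0 := by
          rw [hcastq k, hk0, Nat.cast_zero]
        rw [Nat.sub_add_cancel hkpos, hc, hcast0, mul_zero] at key
        linear_combination -key
    · -- k % q = 1
      have hk1' : k % q = 1 := by omega
      have hkpos : 1 ≤ k := by
        have := Nat.mod_le k q
        omega
      set m := q * (k / q) + q ^ n with hm
      have key := coeff_key p e q n hpf hqpe f hE m
      have hdvd : q ∣ m := Dvd.dvd.add (Dvd.intro _ rfl) (dvd_pow_self q (by omega))
      have hdiv : m / q = k / q + q ^ (n - 1) := by
        have hqn : q ^ n = q * q ^ (n - 1) := by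
          conv_lhs => rw [show n = 1 + (n - 1) by omega, pow_add, pow_one]
        rw [hm, hqn, ← Nat.mul_add, Nat.mul_div_cancel_left _ (by omega : 0 < q)]
      have hmk : m - q ^ n + 1 = k := by omega
      have hmD : D < m := by omega
      rw [if_pos hdvd, if_pos (by omega : q ^ n ≤ m), if_pos (by omega : 1 ≤ m), hdiv, hmk,
        hdeg m hmD, hdeg (m - 1 + 1) (by omega)] at key
      have hcast1 : (((m - q ^ n : ℕ) : K) + 1) = 1 := by
        have h5 : m - q ^ n = k - 1 := by omega
        have hcast0 : ((k - 1 : ℕ) : K) = 0 := by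
          have h6 : k - 1 = q * (k / q) := by omega
          rw [h6]
          push_cast
          rw [hqK]
          ring
        rw [h5, hcast0, zero_add]
      rw [hcast1, mul_one] at key
      simp only [sub_zero, zero_mul, zero_sub, sub_zero] at key
      rw [hk1', one_mul]
      linear_combination -key
  -- Z : low digit ≥ 2 kills
  have hZ : ∀ k, k ≤ D → 2 ≤ k % q → f.coeff k = 0 := by
    intro k hkD h2
    have hdm := Nat.div_add_mod k q
    have hmq : k % q < q := Nat.mod_lt k (by omega)
    have hkpos : 1 ≤ k := by
      have := Nat.mod_le k q
      omega
    -- first equation at k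
    have key1 := coeff_key p e q n hpf hqpe f hE k
    have hndvd : ¬ q ∣ k := by
      intro hdvd
      rw [Nat.mod_eq_zero_of_dvd hdvd] at h2
      omega
    rw [if_neg hndvd, if_neg (by omega : ¬ q ^ n ≤ k), if_pos hkpos,
      Nat.sub_add_cancel hkpos] at key1
    -- second equation at m = (k-1) + q^n
    set m := k - 1 + q ^ n with hm
    have key2 := coeff_key p e q n hpf hqpe f hE m
    have hk1q : (k - 1) % q = k % q - 1 := by
      have h6 : k - 1 = q * (k / q) + (k % q - 1) := by omega
      rw [h6, Nat.mul_add_mod, Nat.mod_eq_of_lt (by omega)]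
    have hndvd2 : ¬ q ∣ m := by
      intro hdvd
      have h7 : m % q = 0 := Nat.mod_eq_zero_of_dvd hdvd
      have h8 : m % q = (k - 1) % q := by
        rw [hm]
        conv_lhs => rw [show q ^ n = q ^ (n - 1) * q by
          rw [← pow_succ]; congr 1; omega]
        rw [Nat.add_mul_mod_self_right]
      omega
    have hmD : D < m := by omega
    have hmk : m - q ^ n + 1 = k := by omega
    rw [if_neg hndvd2, if_pos (by omega : q ^ n ≤ m), if_pos (by omega : 1 ≤ m), hmk,
      hdeg m hmD, hdeg (m - 1 + 1) (by omega)] at key2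
    have h9 : m - q ^ n = k - 1 := by omega
    rw [h9] at key2
    simp only [zero_mul, sub_zero, zero_sub] at key1 key2
    have h10 : f.coeff k = f.coeff k * (((k - 1 : ℕ) : K) + 1) := by linear_combination -key1
    rw [← key2] at h10
    exact h10
  -- digits
  have hdig : ∀ j k, 2 ≤ k / q ^ j % q → f.coeff k = 0 := by
    intro j
    induction j with
    | zero =>
      intro k hk
      simp only [pow_zero, Nat.div_one] at hk
      rcases Nat.lt_or_ge D k with hgt | hle
      · exact hdeg k hgt
      · exact hZ k hle hk
    | succ j ih =>
      intro k hk
      rcases Nat.lt_or_ge D k with hgt | hle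
      · exact hdeg k hgt
      · have hj1n : j + 1 < n := by
          by_contra hjn
          push_neg at hjn
          have hk0 : k / q ^ (j + 1) = 0 := by
            apply Nat.div_eq_of_lt
            calc k ≤ D := hle
              _ < q ^ n := hDlt
              _ ≤ q ^ (j + 1) := Nat.pow_le_pow_right (by omega) hjn
          rw [hk0] at hk
          simp at hk
        rcases Nat.lt_or_ge (k % q) 2 with h01 | h2
        · have hrel := hR k hle (by omega)
          set k' := k / q + k % q * q ^ (n - 1) with hk'
          have hdiv : k' / q ^ j = k / q ^ (j + 1) + k % q * q ^ (n - 1 - j) := by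
            rw [hk', Nat.add_div_of_dvd_left
              (Dvd.dvd.mul_left (pow_dvd_pow q (by omega : j ≤ n - 1)) (k % q))]
            congr 1
            · rw [Nat.div_div_eq_div_mul, ← pow_succ']
            · rw [Nat.mul_div_assoc _ (pow_dvd_pow q (by omega : j ≤ n - 1)),
                Nat.pow_div (by omega) (by omega)]
          have hmod : k' / q ^ j % q = k / q ^ (j + 1) % q := by
            obtain ⟨u, hu⟩ : ∃ u, n - 1 - j = u + 1 := ⟨n - 1 - j - 1, by omega⟩
            rw [hdiv, hu, pow_succ q u, ← mul_assoc, Nat.add_mul_mod_self_right]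
          rw [hrel, ih k' (by omega)]
          exact zero_pow (by omega : q ≠ 0)
        · exact hZ k hle h2
  exact ⟨hdeg, hR, hdig⟩


private lemma trace_surj {K : Type*} [Field K] [Fintype K] (q n t p e : ℕ) (hp : p.Prime)
    (hqpe : q = p ^ e) (he : 1 ≤ e) [CharP K p] (hq2 : 2 ≤ q)
    (hK : Fintype.card K = q ^ n) (ht : 1 ≤ t) (htn : t ∣ n) (hn : 1 ≤ n) (c : K)
    (hc : c ^ q ^ t = c) :
    ∃ α : K, ∑ j ∈ Finset.range (n / t), α ^ q ^ (t * j) = c := by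
  haveI : Fact p.Prime := ⟨hp⟩
  set s := n / t with hs
  have hst : t * s = n := Nat.mul_div_cancel' htn
  have hs1 : 1 ≤ s := by
    rcases Nat.eq_zero_or_pos s with h0 | h1
    · rw [h0] at hst; omega
    · exact h1
  have hPne : (∑ j ∈ Finset.range s, (X : K[X]) ^ q ^ (t * j)) ≠ 0 := by
    intro h
    have hcoeff : (∑ j ∈ Finset.range s, (X : K[X]) ^ q ^ (t * j)).coeff (q ^ (t * (s - 1))) = 1 := by
      rw [finset_sum_coeff]
      rw [Finset.sum_eq_single (s - 1)]
      · rw [coeff_X_pow, if_pos rfl]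
      · intro j hj hne
        rw [coeff_X_pow, if_neg]
        intro hEq
        have h5 := Nat.pow_right_injective hq2 hEq
        have h6 := Nat.eq_of_mul_eq_mul_left (show 0 < t by omega) h5
        omega
      · intro hmem
        exact absurd (Finset.mem_range.mpr (by omega)) hmem
    rw [h] at hcoeff
    simp at hcoeff
  have hPdeg : (∑ j ∈ Finset.range s, (X : K[X]) ^ q ^ (t * j)).natDegree < Fintype.card K := by
    have hle : (∑ j ∈ Finset.range s, (X : K[X]) ^ q ^ (t * j)).natDegree ≤ q ^ (t * (s - 1)) := by
      apply Polynomial.natDegree_sum_le_of_forall_le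
      intro j hj
      rw [Finset.mem_range] at hj
      rw [natDegree_X_pow]
      exact Nat.pow_le_pow_right (by omega) (Nat.mul_le_mul_left t (by omega))
    have hlt : q ^ (t * (s - 1)) < q ^ n := by
      apply Nat.pow_lt_pow_right (by omega)
      calc t * (s - 1) < t * s := by
            exact (Nat.mul_lt_mul_left (by omega)).mpr (by omega)
        _ = n := hst
    rw [hK]
    omega
  obtain ⟨z, hz⟩ := Polynomial.exists_eval_ne_zero_of_natDegree_lt_card _ hPne
    (by rw [Cardinal.mk_fintype]; exact_mod_cast hPdeg)
  have hzval : (∑ j ∈ Finset.range s, (X : K[X]) ^ q ^ (t * j)).eval z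
      = ∑ j ∈ Finset.range s, z ^ q ^ (t * j) := by
    rw [eval_finset_sum]
    simp
  have hTne : (∑ j ∈ Finset.range s, z ^ q ^ (t * j)) ≠ 0 := by
    rw [← hzval]; exact hz
  have hcard : ∀ x : K, x ^ q ^ n = x := by
    intro x; rw [← hK]; exact FiniteField.pow_card x
  have hfixiter : ∀ w : K, w ^ q ^ t = w → ∀ j, w ^ q ^ (t * j) = w := by
    intro w hw j
    induction j with
    | zero => simp
    | succ j ihj =>
      have h7 : t * (j + 1) = t * j + t := by ring
      rw [h7, pow_add, pow_mul, ihj, hw]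
  have hqt : q ^ t = p ^ (e * t) := by rw [hqpe, ← pow_mul]
  have hTfix : (∑ j ∈ Finset.range s, z ^ q ^ (t * j)) ^ q ^ t
      = ∑ j ∈ Finset.range s, z ^ q ^ (t * j) := by
    rw [hqt, sum_pow_char_pow]
    have hterm : ∀ j ∈ Finset.range s, (z ^ q ^ (t * j)) ^ p ^ (e * t)
        = z ^ q ^ (t * (j + 1)) := by
      intro j _
      rw [← hqt, ← pow_mul, ← pow_add, ← Nat.mul_succ]
    rw [Finset.sum_congr rfl hterm]
    refine sum_shift (fun j => z ^ q ^ (t * j)) s ?_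
    show z ^ q ^ (t * s) = z ^ q ^ (t * 0)
    rw [hst, hcard z, Nat.mul_zero, pow_zero, pow_one]
  set T : K := ∑ j ∈ Finset.range s, z ^ q ^ (t * j) with hT
  have hwfix : (c * T⁻¹) ^ q ^ t = c * T⁻¹ := by
    rw [mul_pow, hc, inv_pow, hTfix]
  refine ⟨c * T⁻¹ * z, ?_⟩
  calc ∑ j ∈ Finset.range s, (c * T⁻¹ * z) ^ q ^ (t * j)
      = ∑ j ∈ Finset.range s, (c * T⁻¹) * z ^ q ^ (t * j) := by
        refine Finset.sum_congr rfl fun j _ => ?_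
        rw [mul_pow, hfixiter _ hwfix j]
    _ = (c * T⁻¹) * T := by rw [← Finset.mul_sum]
    _ = c := by
        field_simp


private lemma step_lemma {K : Type*} [Field K] [Fintype K] (q n p e : ℕ) [CharP K p]
    (hpf : Fact p.Prime) (hqpe : q = p ^ e) (he : 1 ≤ e) (hn : 1 ≤ n)
    (hK : Fintype.card K = q ^ n) (f : K[X]) (hf0 : f ≠ 0)
    (hE : f ^ q - f = (X ^ q ^ n - X) * derivative f) :
    ∃ (α₀ : K) (a₀ : ℕ → ℕ), (∀ j, a₀ j ≤ 1) ∧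
      (∀ m, f.natDegree ≤ m → (f - Hpoly q n α₀ a₀).coeff m = 0) := by
  obtain ⟨hdeg, hR, hdig⟩ := structure_lemma q n p e hpf hqpe he hn hK f hE
  have hq2 : 2 ≤ q := by rw [hqpe]; exact Nat.one_lt_pow (by omega) hpf.out.one_lt
  have hgeom := geom_q hq2 n
  have hDle : (∑ j ∈ Finset.range n, q ^ j) ≤ (q - 1) * (∑ j ∈ Finset.range n, q ^ j) :=
    Nat.le_mul_of_pos_left _ (by omega)
  have hDlt : (∑ j ∈ Finset.range n, q ^ j) < q ^ n := by omega
  set d := f.natDegree with hd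
  have hlead : f.coeff d ≠ 0 := by
    rw [hd, ← Polynomial.leadingCoeff]
    exact Polynomial.leadingCoeff_ne_zero.mpr hf0
  set a : ℕ → ℕ := fun j => d / q ^ j % q with ha_def
  have haj : ∀ j, a j = d / q ^ j % q := fun j => by rw [ha_def]
  have ha : ∀ j, a j ≤ 1 := by
    intro j
    by_contra h
    exact hlead (hdig j d (by rw [haj] at h; omega))
  have haq : ∀ j, a j < q := fun j => lt_of_le_of_lt (ha j) (by omega)
  have hdD : d ≤ ∑ j ∈ Finset.range n, q ^ j := by
    by_contra h
    exact hlead (hdeg d (by omega))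
  have hdlt : d < q ^ n := lt_of_le_of_lt hdD hDlt
  have hk0 : shiftExp q n a 0 = d := by
    rw [shiftExp_zero_eq]
    calc ∑ j ∈ Finset.range n, a j * q ^ j
        = ∑ j ∈ Finset.range n, (d / q ^ j % q) * q ^ j :=
          Finset.sum_congr rfl fun j _ => by rw [haj]
      _ = d := sum_digits_eq hq2 n d hdlt
  have hF2 : ∀ i, i < n → f.coeff (shiftExp q n a (i + 1)) = f.coeff (shiftExp q n a i) ^ q := by
    intro i hi
    have h1 := hR (shiftExp q n a (i + 1)) (shiftExp_le q n a ha (i + 1))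
      (by rw [L1b hq2 ha hi]; exact ha _)
    rw [L1c hq2 ha hi] at h1
    exact h1
  have hF3 : ∀ i, i ≤ n → f.coeff (shiftExp q n a i) = f.coeff d ^ q ^ i := by
    intro i
    induction i with
    | zero => intro _; rw [hk0, pow_zero, pow_one]
    | succ i ihi =>
      intro hin
      rw [hF2 i (by omega), ihi (by omega), ← pow_mul, ← pow_succ]
  have hF4 : ∀ i, i ≤ n → shiftExp q n a i ≤ d := by
    intro i hin
    apply Polynomial.le_natDegree_of_ne_zero
    rw [hF3 i hin]
    exact pow_ne_zero _ hlead
  -- stabilizer subgroup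
  set Q : ℕ → Prop := fun s => ∀ j, j < n → a ((j + s) % n) = a j with hQdef
  have hQs : ∀ s, Q s ↔ ∀ j, j < n → a ((j + s) % n) = a j := fun s => by rw [hQdef]
  have hQn : Q n := by
    rw [hQs]
    intro j hj
    rw [Nat.add_mod_right, Nat.mod_eq_of_lt hj]
  have hQzero : Q 0 := by
    rw [hQs]
    intro j hj
    rw [Nat.add_zero, Nat.mod_eq_of_lt hj]
  have hQadd : ∀ u v, Q u → Q v → Q (u + v) := by
    intro u v hu hv
    rw [hQs] at hu hv ⊢
    intro j hj
    have h1 : (j + (u + v)) % n = ((j + u) % n + v) % n := by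
      rw [Nat.mod_add_mod, Nat.add_assoc]
    rw [h1, hv _ (Nat.mod_lt _ (by omega)), hu _ hj]
  have hQex : ∃ s, 0 < s ∧ Q s := ⟨n, by omega, hQn⟩
  haveI : DecidablePred fun s => 0 < s ∧ Q s := fun s => Classical.dec _
  set t := Nat.find hQex with htdef
  have htpos : 0 < t := (Nat.find_spec hQex).1
  have hQt : Q t := (Nat.find_spec hQex).2
  have htlen : t ≤ n := Nat.find_min' hQex ⟨by omega, hQn⟩
  have hQmul : ∀ m, Q (t * m) := by
    intro m
    induction m with
    | zero => rw [Nat.mul_zero]; exact hQzero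
    | succ m ihm => rw [Nat.mul_succ]; exact hQadd _ _ ihm hQt
  have hQdvd : ∀ s, Q s → t ∣ s := by
    intro s hQs'
    have hmod : Q (s % t) := by
      rw [hQs]
      intro j hj
      have h2 := hQmul (s / t)
      rw [hQs] at h2 hQs'
      have h3 := h2 ((j + s % t) % n) (Nat.mod_lt _ (by omega))
      rw [Nat.mod_add_mod] at h3
      have h4 : j + s % t + t * (s / t) = j + s := by
        rw [Nat.add_assoc]
        congr 1
        rw [Nat.mod_add_div]
      rw [h4] at h3
      rw [← h3, hQs' j hj]
    rcases Nat.eq_zero_or_pos (s % t) with h0 | hpos2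
    · exact Nat.dvd_of_mod_eq_zero h0
    · exact absurd ⟨hpos2, hmod⟩ (Nat.find_min hQex (Nat.mod_lt s htpos))
  have htdvdn : t ∣ n := hQdvd n hQn
  -- characterization of the stabilizer of d
  have hchar1 : ∀ i, i < n → (shiftExp q n a i = d ↔ t ∣ i) := by
    intro i hi
    constructor
    · intro heq
      have hQni : Q (n - i) := by
        rw [hQs]
        intro j hj
        have hb := digit_sum hq2 n (fun j' => a ((j' + n - i) % n)) (fun j' => haq _) j hj
        have hsum_eq : (∑ j' ∈ Finset.range n, a ((j' + n - i) % n) * q ^ j') = d := heq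
        rw [hsum_eq, ← haj] at hb
        rw [show j + (n - i) = j + n - i by omega]
        exact hb.symm
      have h3 : t ∣ n - (n - i) := Nat.dvd_sub htdvdn (hQdvd _ hQni)
      rwa [show n - (n - i) = i by omega] at h3
    · intro hdvd
      obtain ⟨m, hm⟩ := Nat.dvd_sub htdvdn hdvd
      have hQni : Q (n - i) := hm ▸ hQmul m
      rw [hQs] at hQni
      have heq0 : shiftExp q n a i = shiftExp q n a 0 := by
        apply Finset.sum_congr rfl
        intro j hj
        rw [Finset.mem_range] at hj
        have h5 : j + n - i = j + (n - i) := by omega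
        rw [h5, hQni j hj, Nat.sub_zero, Nat.add_mod_right, Nat.mod_eq_of_lt hj]
      rw [heq0, hk0]
  -- the leading coefficient is fixed by q^t
  have hfixd : f.coeff d ^ q ^ t = f.coeff d := by
    rcases Nat.eq_or_lt_of_le htlen with heqt | htlt
    · rw [heqt, ← hK]
      exact FiniteField.pow_card _
    · have hi0 : n - t < n := by omega
      have hsh : shiftExp q n a (n - t) = d :=
        (hchar1 _ hi0).mpr (Nat.dvd_sub htdvdn (dvd_refl t))
      have h5 := hF3 (n - t) (by omega)
      rw [hsh] at h5
      calc f.coeff d ^ q ^ t = (f.coeff d ^ q ^ (n - t)) ^ q ^ t := by rw [← h5]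
        _ = f.coeff d ^ (q ^ (n - t) * q ^ t) := by rw [← pow_mul]
        _ = f.coeff d ^ q ^ n := by rw [← pow_add, show n - t + t = n by omega]
        _ = f.coeff d := by rw [← hK]; exact FiniteField.pow_card _
  obtain ⟨α, hα⟩ := trace_surj q n t p e hpf.out hqpe he hq2 hK htpos htdvdn hn _ hfixd
  refine ⟨α, a, ha, ?_⟩
  intro m hm
  rw [coeff_sub]
  have hgco : (Hpoly q n α a).coeff m
      = ∑ i ∈ Finset.range n, if m = shiftExp q n a i then α ^ q ^ i else 0 := by
    rw [Hpoly, finset_sum_coeff]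
    refine Finset.sum_congr rfl fun i _ => ?_
    rw [coeff_C_mul, coeff_X_pow, mul_ite, mul_one, mul_zero]
  rcases Nat.lt_or_ge d m with hlt | hge
  · rw [coeff_eq_zero_of_natDegree_lt hlt, hgco, Finset.sum_eq_zero, sub_zero]
    intro i hi
    rw [Finset.mem_range] at hi
    rw [if_neg]
    intro hEq
    have := hF4 i (by omega)
    omega
  · have hmd : m = d := by omega
    subst hmd
    rw [hgco]
    have hsum_ite : (∑ i ∈ Finset.range n, if d = shiftExp q n a i then α ^ q ^ i else 0)
        = ∑ i ∈ Finset.filter (fun i => d = shiftExp q n a i) (Finset.range n), α ^ q ^ i :=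
      (Finset.sum_filter _ _).symm
    have hst : t * (n / t) = n := Nat.mul_div_cancel' htdvdn
    have hfilter : Finset.filter (fun i => d = shiftExp q n a i) (Finset.range n)
        = Finset.image (fun j => t * j) (Finset.range (n / t)) := by
      ext i
      simp only [Finset.mem_filter, Finset.mem_range, Finset.mem_image]
      constructor
      · rintro ⟨hin, hEq⟩
        obtain ⟨j, hj⟩ := (hchar1 i hin).mp hEq.symm
        refine ⟨j, ?_, hj.symm⟩
        by_contra hc
        push_neg at hc
        have : t * (n / t) ≤ t * j := Nat.mul_le_mul_left t hc
        omega
      · rintro ⟨j, hjlt, rfl⟩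
        have hin : t * j < n := by
          calc t * j < t * (n / t) := (Nat.mul_lt_mul_left (by omega)).mpr hjlt
            _ = n := hst
        exact ⟨hin, ((hchar1 _ hin).mpr ⟨j, rfl⟩).symm⟩
    rw [hsum_ite, hfilter, Finset.sum_image
      (fun x _ y _ hxy => Nat.eq_of_mul_eq_mul_left htpos hxy), hα, sub_self]



/-- Let `K` have `q^n` elements. A polynomial `f ∈ K[X]` satisfies
`f^q − f = (X^{q^n} − X)·f'` iff `f` is a finite sum of polynomials `H_{α,k}` where
`k` has all base-`q` digits in `{0,1}`. -/
theorem stmt12 (q n : ℕ) (hq : IsPrimePow q) (hn : 1 ≤ n)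
    {K : Type*} [Field K] [Fintype K] (hK : Fintype.card K = q ^ n)
    (f : K[X]) :
    f ^ q - f = (X ^ q ^ n - X) * f.derivative ↔
      ∃ (m : ℕ) (α : ℕ → K) (a : ℕ → ℕ → ℕ),
        (∀ t j, a t j ≤ 1) ∧
        f = ∑ t ∈ Finset.range m, Hpoly q n (α t) (a t) := by
  obtain ⟨p, e, hpp, he0, hqpe0⟩ := hq
  have hp : p.Prime := hpp.nat_prime
  have hqpe : q = p ^ e := hqpe0.symm
  have he : 1 ≤ e := he0
  haveI hpf : Fact p.Prime := ⟨hp⟩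
  haveI hcharK : CharP K p := by
    haveI : CharP K (ringChar K) := ringChar.charP K
    obtain ⟨m, hrp, hcard⟩ := FiniteField.card K (ringChar K)
    have h1 : ringChar K ∣ p ^ (e * n) := by
      rw [pow_mul, ← hqpe, ← hK, hcard]
      exact dvd_pow_self _ (by exact_mod_cast m.ne_zero)
    have h2 : ringChar K = p :=
      (Nat.prime_dvd_prime_iff_eq hrp hp).mp (hrp.dvd_of_dvd_pow h1)
    exact h2 ▸ ringChar.charP K
  constructor
  · intro hE
    have main : ∀ (N' : ℕ) (g : K[X]), g ^ q - g = (X ^ q ^ n - X) * derivative g →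
        g.natDegree ≤ N' →
        ∃ (m : ℕ) (α : ℕ → K) (a : ℕ → ℕ → ℕ), (∀ t j, a t j ≤ 1) ∧
          g = ∑ t ∈ Finset.range m, Hpoly q n (α t) (a t) := by
      intro N'
      induction N' with
      | zero =>
        intro g hEg hdeg0
        rcases eq_or_ne g 0 with rfl | hg0
        · exact ⟨0, fun _ => 0, fun _ _ => 0, fun _ _ => Nat.zero_le 1, by simp⟩
        · obtain ⟨α₀, a₀, ha₀, hco⟩ := step_lemma q n p e hpf hqpe he hn hK g hg0 hEg
          have hzero : g - Hpoly q n α₀ a₀ = 0 := by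
            apply Polynomial.ext
            intro m
            rw [Polynomial.coeff_zero]
            exact hco m (by omega)
          have hgH : g = Hpoly q n α₀ a₀ := by rwa [sub_eq_zero] at hzero
          exact ⟨1, fun _ => α₀, fun _ => a₀, fun _ j => ha₀ j,
            by rw [Finset.sum_range_one]; exact hgH⟩
      | succ N'' ih =>
        intro g hEg hdegle
        rcases eq_or_ne g 0 with rfl | hg0
        · exact ⟨0, fun _ => 0, fun _ _ => 0, fun _ _ => Nat.zero_le 1, by simp⟩
        · obtain ⟨α₀, a₀, ha₀, hco⟩ := step_lemma q n p e hpf hqpe he hn hK g hg0 hEg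
          have hEH := Hpoly_sat q n p e hp hqpe he hn hK α₀ a₀ ha₀
          have hEh : (g - Hpoly q n α₀ a₀) ^ q - (g - Hpoly q n α₀ a₀)
              = (X ^ q ^ n - X) * derivative (g - Hpoly q n α₀ a₀) := by
            have hsub : (g - Hpoly q n α₀ a₀) ^ q = g ^ q - (Hpoly q n α₀ a₀) ^ q := by
              conv_lhs => rw [hqpe]
              rw [sub_pow_char_pow, ← hqpe]
            rw [hsub, derivative_sub, mul_sub]
            linear_combination hEg - hEH
          have hdegh : (g - Hpoly q n α₀ a₀).natDegree ≤ N'' := by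
            rw [Polynomial.natDegree_le_iff_coeff_eq_zero]
            intro m hm
            exact hco m (by omega)
          obtain ⟨m', α', a', ha', hsum'⟩ := ih (g - Hpoly q n α₀ a₀) hEh hdegh
          refine ⟨m' + 1, fun t => if t < m' then α' t else α₀,
            fun t => if t < m' then a' t else a₀, ?_, ?_⟩
          · intro t j
            dsimp only
            split_ifs
            · exact ha' t j
            · exact ha₀ j
          · rw [Finset.sum_range_succ]
            have hrest : (∑ t ∈ Finset.range m',
                  Hpoly q n (if t < m' then α' t else α₀) (if t < m' then a' t else a₀))
                = ∑ t ∈ Finset.range m', Hpoly q n (α' t) (a' t) := by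
              refine Finset.sum_congr rfl fun t ht => ?_
              rw [Finset.mem_range] at ht
              rw [if_pos ht, if_pos ht]
            rw [hrest, ← hsum']
            simp only [lt_irrefl, ite_false]
            ring
    exact main f.natDegree f hE le_rfl
  · rintro ⟨m, α, a, ha, rfl⟩
    have hsumpow : (∑ t ∈ Finset.range m, Hpoly q n (α t) (a t)) ^ q
        = ∑ t ∈ Finset.range m, (Hpoly q n (α t) (a t)) ^ q := by
      conv_lhs => rw [hqpe]
      rw [sum_pow_char_pow]
      exact Finset.sum_congr rfl fun t _ => by rw [hqpe]
    rw [hsumpow, derivative_sum, Finset.mul_sum, ← Finset.sum_sub_distrib]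
    exact Finset.sum_congr rfl fun t _ =>
      Hpoly_sat q n p e hp hqpe he hn hK (α t) (a t) (ha t)
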